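/- Suppose weak orders ≿₁, ≿₂ rationalize a dataset in the sophisticated sense, and define the relation R₁ by x^k R₁ x^s iff x^k ≠ x^s and x^s ∈ B^k(x₁^s) ⊆ B^s(x₁^s). Then x^k R₁ x^s implies x^k ≻₁ x^s; in particular R₁ is acyclic. -/

import Mathlib

def maxSet {X : Type} (S : Set X) (pref : X → X → Prop) : Set X :=
  {x | x ∈ S ∧ ∀ y ∈ S, pref x y}

def WeakOrder {X : Type} (pref : X → X → Prop) : Prop :=
  (∀ a b, pref a b ∨ pref b a) ∧ Transitive pref

def sec1 {X₁ X₂ : Type} (B : Set (X₁ × X₂)) (a : X₁) : Set (X₁ × X₂) :=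
  {y ∈ B | y.1 = a}

def sec2 {X₁ X₂ : Type} (B : Set (X₁ × X₂)) (b : X₂) : Set (X₁ × X₂) :=
  {y ∈ B | y.2 = b}

def NSARP {K X₁ X₂ : Type} (x : K → X₁ × X₂) (B : K → Set (X₁ × X₂)) : Prop :=
  ¬ ∃ (L : ℕ) (k : Fin (L + 1) → K), ∀ l : Fin (L + 1),
      x (k l) ≠ x (k (l + 1)) ∧ x (k l) ∈ sec1 (B (k (l + 1))) (x (k (l + 1))).1

def NNSARP {K X₁ X₂ : Type} (x : K → X₁ × X₂) (B : K → Set (X₁ × X₂)) : Prop :=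
  ¬ ∃ (L : ℕ) (k : Fin (L + 1) → K), ∀ l : Fin (L + 1),
      x (k l) ≠ x (k (l + 1)) ∧ x (k l) ∈ sec2 (B (k (l + 1))) (x (k (l + 1))).2

def Cond1 {K X₁ X₂ : Type} (x : K → X₁ × X₂) (B : K → Set (X₁ × X₂)) : Prop :=
  ∀ S : Set K, S.Nonempty →
    ¬ (⋃ k ∈ S, sec1 (B k) (x k).1) ⊆ ⋃ k ∈ S, (B k \ sec1 (B k) (x k).1)

def Cond2 {K X₁ X₂ : Type} (x : K → X₁ × X₂) (B : K → Set (X₁ × X₂)) : Prop :=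
  ¬ ∃ (L : ℕ) (k : Fin (L + 1) → K), ∀ l : Fin (L + 1),
      x (k l) ≠ x (k (l + 1)) ∧ x (k l) ∈ sec1 (B (k (l + 1))) (x (k l)).1 ∧
      sec1 (B (k (l + 1))) (x (k l)).1 ⊆ sec1 (B (k l)) (x (k l)).1

def NaiveRat {K X₁ X₂ : Type} (x : K → X₁ × X₂) (B : K → Set (X₁ × X₂)) : Prop :=
  ∃ p1 p2 : X₁ × X₂ → X₁ × X₂ → Prop, WeakOrder p1 ∧ WeakOrder p2 ∧
    ∀ k, (∃ z, maxSet (B k) p1 = {z} ∧ z ∈ sec1 (B k) (x k).1) ∧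
      maxSet (sec1 (B k) (x k).1) p2 = {x k}

def NaiveNashRat {K X₁ X₂ : Type} (x : K → X₁ × X₂) (B : K → Set (X₁ × X₂)) : Prop :=
  ∃ p1 p2 : X₁ × X₂ → X₁ × X₂ → Prop, WeakOrder p1 ∧ WeakOrder p2 ∧
    ∀ k, x k ∈ maxSet (sec2 (B k) (x k).2) p1 ∧
      maxSet (sec1 (B k) (x k).1) p2 = {x k}

def StrictNaiveNashRat {K X₁ X₂ : Type} (x : K → X₁ × X₂) (B : K → Set (X₁ × X₂)) : Prop :=
  ∃ p1 p2 : X₁ × X₂ → X₁ × X₂ → Prop, WeakOrder p1 ∧ WeakOrder p2 ∧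
    ∀ k, maxSet (sec2 (B k) (x k).2) p1 = {x k} ∧
      maxSet (sec1 (B k) (x k).1) p2 = {x k}

def SophRat {K X₁ X₂ : Type} (x : K → X₁ × X₂) (B : K → Set (X₁ × X₂)) : Prop :=
  ∃ p1 p2 : X₁ × X₂ → X₁ × X₂ → Prop, WeakOrder p1 ∧ WeakOrder p2 ∧
    ∀ k, maxSet (⋃ a ∈ Prod.fst '' B k, maxSet (sec1 (B k) a) p2) p1 = {x k}

theorem R1_implies_strict_pref_and_acyclic
    {K X₁ X₂ : Type} [Fintype K]
    (x : K → X₁ × X₂) (B : K → Set (X₁ × X₂)) (hmem : ∀ k, x k ∈ B k)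
    (p1 p2 : X₁ × X₂ → X₁ × X₂ → Prop)
    (hw1 : WeakOrder p1) (hw2 : WeakOrder p2)
    (hrat : ∀ k, maxSet (⋃ a ∈ Prod.fst '' B k, maxSet (sec1 (B k) a) p2) p1 = {x k}) :
    let R1 : K → K → Prop := fun k s =>
      x k ≠ x s ∧ x s ∈ sec1 (B k) (x s).1 ∧ sec1 (B k) (x s).1 ⊆ sec1 (B s) (x s).1
    (∀ k s, R1 k s → (p1 (x k) (x s) ∧ ¬ p1 (x s) (x k))) ∧
      ¬ ∃ (L : ℕ) (c : Fin (L + 1) → K), ∀ l : Fin (L + 1), R1 (c l) (c (l + 1)) := by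
  intro R1
  obtain ⟨htot1, htr1⟩ := hw1
  -- main step: R1 k s implies strict p1 preference
  have main : ∀ k s, R1 k s → (p1 (x k) (x s) ∧ ¬ p1 (x s) (x k)) := by
    intro k s ⟨hne, hsmem, hsub⟩
    -- x s is p2-maximal in sec1 (B s) (x s).1
    have hxs : x s ∈ maxSet (⋃ a ∈ Prod.fst '' B s, maxSet (sec1 (B s) a) p2) p1 := by
      rw [hrat s]; rfl
    obtain ⟨hxsU, _⟩ := hxs
    simp only [Set.mem_iUnion] at hxsU
    obtain ⟨a, ⟨_, _⟩, hmax⟩ := hxsU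
    have ha : (x s).1 = a := hmax.1.2
    rw [← ha] at hmax
    -- hence x s is p2-maximal in sec1 (B k) (x s).1
    have hmax' : x s ∈ maxSet (sec1 (B k) (x s).1) p2 :=
      ⟨hsmem, fun y hy => hmax.2 y (hsub hy)⟩
    -- so x s is in the feasible anticipated-outcome set of B k
    have hsin : x s ∈ ⋃ a ∈ Prod.fst '' B k, maxSet (sec1 (B k) a) p2 := by
      simp only [Set.mem_iUnion]
      exact ⟨(x s).1, ⟨⟨x s, hsmem.1, rfl⟩, hmax'⟩⟩
    have hxk : x k ∈ maxSet (⋃ a ∈ Prod.fst '' B k, maxSet (sec1 (B k) a) p2) p1 := by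
      rw [hrat k]; rfl
    have h1 : p1 (x k) (x s) := hxk.2 _ hsin
    refine ⟨h1, fun h2 => ?_⟩
    have : x s ∈ maxSet (⋃ a ∈ Prod.fst '' B k, maxSet (sec1 (B k) a) p2) p1 :=
      ⟨hsin, fun y hy => htr1 h2 (hxk.2 y hy)⟩
    rw [hrat k] at this
    exact hne (this.symm)
  refine ⟨main, ?_⟩
  rintro ⟨L, c, hc⟩
  set sp : (X₁ × X₂) → (X₁ × X₂) → Prop := fun a b => p1 a b ∧ ¬ p1 b a with hsp
  have hstep : ∀ l : Fin (L + 1), sp (x (c l)) (x (c (l + 1))) :=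
    fun l => main _ _ (hc l)
  have htr : ∀ {a b d}, sp a b → sp b d → sp a d := by
    rintro a b d ⟨h1, h2⟩ ⟨h3, h4⟩
    exact ⟨htr1 h1 h3, fun h => h4 (htr1 h h1)⟩
  open Fin.NatCast in
  have key : ∀ n : ℕ, sp (x (c 0)) (x (c ((n + 1 : ℕ) : Fin (L + 1)))) := by
    intro n
    induction n with
    | zero =>
      have := hstep 0
      simpa using this
    | succ m ih =>
      have h2 := hstep ((m + 1 : ℕ) : Fin (L + 1))
      have : ((m + 1 : ℕ) : Fin (L + 1)) + 1 = ((m + 2 : ℕ) : Fin (L + 1)) := by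
        push_cast; rw [add_assoc, one_add_one_eq_two]
      rw [this] at h2
      exact htr ih h2
  have hcyc := key L
  open Fin.NatCast in
  have hz : ((L + 1 : ℕ) : Fin (L + 1)) = 0 := by simp
  rw [hz] at hcyc
  exact hcyc.2 hcyc.1
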